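/- Let (μ₀, μ) be finite nonnegative Borel measures, with μ₀ supported in X and μ supported in X × U, satisfying the discounted Liouville equation, and let μ̃ denote the x-marginal of μ, i.e. μ̃(A) := μ(A × ℝᵐ). Then supp μ₀ ⊆ supp μ̃, and for every x ∈ supp μ̃ there exists u ∈ U with f(x,u) ∈ supp μ̃; in particular supp μ̃ is a controlled invariant subset of X. -/

import Mathlib

open MeasureTheory

/-- The (topological) support of a Borel measure. -/
def msupport {α : Type*} [TopologicalSpace α] [MeasurableSpace α] (μ : Measure α) : Set α :=
  {x | ∀ s : Set α, IsOpen s → x ∈ s → 0 < μ s}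

/-- The discrete-time discounted Liouville equation for the pair `(μ₀, μ)`. -/
def LiouvilleD {n m : ℕ}
    (f : EuclideanSpace ℝ (Fin n) → EuclideanSpace ℝ (Fin m) → EuclideanSpace ℝ (Fin n))
    (α : ℝ) (μ₀ : Measure (EuclideanSpace ℝ (Fin n)))
    (μ : Measure (EuclideanSpace ℝ (Fin n) × EuclideanSpace ℝ (Fin m))) : Prop :=
  ∀ v : EuclideanSpace ℝ (Fin n) → ℝ, Continuous v →
    ∫ p, v p.1 ∂μ = ∫ x, v x ∂μ₀ + α * ∫ p, v (f p.1 p.2) ∂μ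

lemma not_mem_msupport {α : Type*} [TopologicalSpace α] [MeasurableSpace α]
    {ν : Measure α} {x : α} (h : x ∉ msupport ν) :
    ∃ s : Set α, IsOpen s ∧ x ∈ s ∧ ν s = 0 := by
  simp only [msupport, Set.mem_setOf_eq, not_forall] at h
  obtain ⟨s, hso, hxs, hs⟩ := h
  exact ⟨s, hso, hxs, by simpa [pos_iff_ne_zero, not_not] using hs⟩

lemma msupport_compl_null {α : Type*} [TopologicalSpace α]
    [SecondCountableTopology α] [MeasurableSpace α]
    (ν : Measure α) : ν (msupport ν)ᶜ = 0 := by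
  obtain ⟨T, hTc, hTS, hT⟩ := TopologicalSpace.isOpen_sUnion_countable
    {s : Set α | IsOpen s ∧ ν s = 0} (fun s hs => hs.1)
  have h1 : (msupport ν)ᶜ ⊆ ⋃₀ T := by
    rw [hT]
    intro x hx
    obtain ⟨s, hso, hxs, hs0⟩ := not_mem_msupport hx
    exact ⟨s, ⟨hso, hs0⟩, hxs⟩
  refine measure_mono_null h1 ?_
  rw [Set.sUnion_eq_biUnion]
  exact (measure_biUnion_null_iff hTc).2 fun s hs => (hTS hs).2

lemma integrable_of_bdd_one {α : Type*} [MeasurableSpace α] [TopologicalSpace α]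
    [OpensMeasurableSpace α] {ν : Measure α} [IsFiniteMeasure ν] {g : α → ℝ}
    (hg : Continuous g) (hb : ∀ a, g a ∈ Set.Icc (0:ℝ) 1) : Integrable g ν := by
  refine (integrable_const (1:ℝ)).mono' hg.aestronglyMeasurable (ae_of_all _ fun a => ?_)
  have := hb a
  rw [Real.norm_eq_abs, abs_of_nonneg this.1]
  exact this.2

lemma pos_integral_of_pos_meas {α : Type*} [MeasurableSpace α]
    {ν : Measure α} [IsFiniteMeasure ν] {g : α → ℝ}
    (hg0 : ∀ a, 0 ≤ g a) (hgi : Integrable g ν)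
    (hset : 0 < ν {a | (1:ℝ)/2 ≤ g a}) : 0 < ∫ a, g a ∂ν := by
  have h := mul_meas_ge_le_integral_of_nonneg (ae_of_all _ hg0) hgi (1/2)
  have h2 : 0 < ν.real {a | (1:ℝ)/2 ≤ g a} :=
    ENNReal.toReal_pos hset.ne' (measure_ne_top ν _)
  nlinarith

lemma integral_eq_zero_of_null {α : Type*} [MeasurableSpace α]
    {ν : Measure α} {g : α → ℝ} {N : Set α}
    (hN : ν N = 0) (hg : ∀ a, g a ≠ 0 → a ∈ N) : ∫ a, g a ∂ν = 0 := by
  have hnull : ν {a | g a ≠ 0} = 0 := measure_mono_null hg hN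
  have : g =ᵐ[ν] 0 := by
    rw [Filter.EventuallyEq, ae_iff]
    simpa using hnull
  simpa using integral_congr_ae this

/-- If `(μ₀, μ)` satisfies the discounted Liouville equation then, writing `μ̃` for the
`x`-marginal of `μ`, we have `supp μ₀ ⊆ supp μ̃` and `supp μ̃` is a controlled invariant
subset of `X`: for every `x ∈ supp μ̃` there exists `u ∈ U` with `f(x,u) ∈ supp μ̃`. -/
theorem support_of_marginal_controlled_invariant {n m : ℕ}
    (X : Set (EuclideanSpace ℝ (Fin n))) (U : Set (EuclideanSpace ℝ (Fin m)))
    (hX : IsCompact X) (hU : IsCompact U)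
    (f : EuclideanSpace ℝ (Fin n) → EuclideanSpace ℝ (Fin m) → EuclideanSpace ℝ (Fin n))
    (hf : Continuous fun p : EuclideanSpace ℝ (Fin n) × EuclideanSpace ℝ (Fin m) => f p.1 p.2)
    (α : ℝ) (hα0 : 0 < α) (hα1 : α < 1)
    (μ₀ : Measure (EuclideanSpace ℝ (Fin n)))
    (μ : Measure (EuclideanSpace ℝ (Fin n) × EuclideanSpace ℝ (Fin m)))
    [IsFiniteMeasure μ₀] [IsFiniteMeasure μ]
    (hsupp₀ : msupport μ₀ ⊆ X) (hsupp : msupport μ ⊆ X ×ˢ U)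
    (hLiouville : LiouvilleD f α μ₀ μ) :
    msupport μ₀ ⊆ msupport (μ.map Prod.fst) ∧
    msupport (μ.map Prod.fst) ⊆ X ∧
    ∀ x ∈ msupport (μ.map Prod.fst), ∃ u ∈ U, f x u ∈ msupport (μ.map Prod.fst) := by
  set ν := μ.map Prod.fst with hν
  have hmap : ∀ s : Set (EuclideanSpace ℝ (Fin n)), MeasurableSet s →
      ν s = μ (Prod.fst ⁻¹' s) := fun s hs => Measure.map_apply measurable_fst hs
  have hμcompl : μ (msupport μ)ᶜ = 0 := msupport_compl_null μ
  have hXU : μ (X ×ˢ U)ᶜ = 0 :=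
    measure_mono_null (Set.compl_subset_compl.2 hsupp) hμcompl
  have hνcompl : ν (msupport ν)ᶜ = 0 := msupport_compl_null ν
  -- map of integrals
  have hintmap : ∀ v : EuclideanSpace ℝ (Fin n) → ℝ, Continuous v →
      ∫ y, v y ∂ν = ∫ p, v p.1 ∂μ := fun v hv =>
    integral_map measurable_fst.aemeasurable hv.aestronglyMeasurable
  -- Claim: msupport ν ⊆ X
  have hA : msupport ν ⊆ X := by
    intro x hx
    by_contra hxX
    have h0 : ν Xᶜ = 0 := by
      rw [hmap _ hX.isClosed.measurableSet.compl]
      refine measure_mono_null (fun p hp => ?_) hXU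
      exact fun hpXU => hp hpXU.1
    exact absurd (hx Xᶜ hX.isClosed.isOpen_compl hxX) (by simp [h0])
  refine ⟨?_, hA, ?_⟩
  · -- msupport μ₀ ⊆ msupport ν
    intro x hx
    by_contra h
    obtain ⟨s, hso, hxs, hs0⟩ := not_mem_msupport h
    obtain ⟨v, hv0, hv1, hv01⟩ := exists_continuous_zero_one_of_isClosed
      hso.isClosed_compl isClosed_singleton
      (Set.disjoint_singleton_right.2 (by simpa using hxs))
    have hL := hLiouville v v.continuous
    have hmap' : ∫ p, v p.1 ∂μ = 0 := by
      rw [← hintmap v v.continuous]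
      refine integral_eq_zero_of_null hs0 fun a ha => ?_
      by_contra has
      exact ha (hv0 has)
    have hpos : 0 < ∫ y, v y ∂μ₀ := by
      refine pos_integral_of_pos_meas (fun a => (hv01 a).1)
        (integrable_of_bdd_one v.continuous hv01) ?_
      refine lt_of_lt_of_le (hx {y | (1:ℝ)/2 < v y}
        (isOpen_lt continuous_const v.continuous) ?_)
        (measure_mono fun y (hy : (1:ℝ)/2 < v y) => (le_of_lt hy : y ∈ {a | (1:ℝ)/2 ≤ v a}))
      have : v x = 1 := hv1 rfl
      simp only [Set.mem_setOf_eq, this]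
      norm_num
    have hnn : 0 ≤ ∫ p, v (f p.1 p.2) ∂μ := integral_nonneg fun p => (hv01 _).1
    nlinarith
  · -- controlled invariance
    intro x hx
    by_contra h
    push_neg at h
    set N := (msupport ν)ᶜ with hN
    have hNopen : IsOpen N := by
      refine isOpen_iff_forall_mem_open.2 fun y hy => ?_
      obtain ⟨s, hso, hys, hs0⟩ := not_mem_msupport hy
      refine ⟨s, fun z hz hzsup => ?_, hso, hys⟩
      simpa [hs0] using hzsup s hso hz
    have hK : IsCompact ((fun u => f x u) '' U) :=
      hU.image (hf.comp (Continuous.prodMk_right x))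
    have hKN : (fun u => f x u) '' U ⊆ N := by
      rintro _ ⟨u, hu, rfl⟩
      exact h u hu
    obtain ⟨v, hv0, hv1, hv01⟩ := exists_continuous_zero_one_of_isClosed
      hNopen.isClosed_compl hK.isClosed
      (Set.disjoint_left.2 fun y hyc hyK => hyc (hKN hyK))
    -- tube lemma
    have hWopen : IsOpen {p : EuclideanSpace ℝ (Fin n) × EuclideanSpace ℝ (Fin m) |
        (1:ℝ)/2 < v (f p.1 p.2)} := isOpen_lt continuous_const (v.continuous.comp hf)
    have hsub : ({x} : Set (EuclideanSpace ℝ (Fin n))) ×ˢ U ⊆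
        {p | (1:ℝ)/2 < v (f p.1 p.2)} := by
      rintro ⟨y, u⟩ ⟨hy, hu⟩
      have hy' : y = x := hy
      have h1 : v (f y u) = 1 := by rw [hy']; exact hv1 ⟨u, hu, rfl⟩
      show (1:ℝ)/2 < v (f y u)
      rw [h1]; norm_num
    obtain ⟨s, t, hso, hto, hxs, hUt, hst⟩ :=
      generalized_tube_lemma isCompact_singleton hU hWopen hsub
    -- μ (s ×ˢ t) is positive
    have hνs : 0 < ν s := hx s hso (hxs rfl)
    have hmono : ν s ≤ μ (s ×ˢ t) := by
      rw [hmap s hso.measurableSet]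
      calc μ (Prod.fst ⁻¹' s) ≤ μ (s ×ˢ t ∪ (X ×ˢ U)ᶜ) := by
            refine measure_mono fun p hp => ?_
            by_cases hpXU : p ∈ X ×ˢ U
            · exact Or.inl ⟨hp, hUt hpXU.2⟩
            · exact Or.inr hpXU
        _ ≤ μ (s ×ˢ t) + μ (X ×ˢ U)ᶜ := measure_union_le _ _
        _ = μ (s ×ˢ t) := by rw [hXU, add_zero]
    have hL := hLiouville v v.continuous
    have hzero : ∫ p, v p.1 ∂μ = 0 := by
      rw [← hintmap v v.continuous]
      refine integral_eq_zero_of_null hνcompl fun a ha => ?_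
      by_contra has
      exact ha (hv0 has)
    have hpos : 0 < ∫ p, v (f p.1 p.2) ∂μ := by
      refine pos_integral_of_pos_meas (fun p => (hv01 _).1)
        (integrable_of_bdd_one (v.continuous.comp hf) fun p => hv01 _) ?_
      refine lt_of_lt_of_le (lt_of_lt_of_le hνs hmono) (measure_mono fun p hp => ?_)
      show (1:ℝ)/2 ≤ v (f p.1 p.2)
      exact le_of_lt (hst hp)
    have hnn : 0 ≤ ∫ y, v y ∂μ₀ := integral_nonneg fun y => (hv01 _).1
    nlinarith
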